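/- With π^{(n)}_i = r^{i−1}(1−r)/(1−r^n) on {1,…,n} where r = δ/(1−δ) and 1/2 < δ < 1 (so r > 1): for every fixed i, lim_{n→∞} π^{(n)}_i = 0, but lim_{n→∞} max_{1≤i≤n} π^{(n)}_i = lim_{n→∞} π^{(n)}_n = 1 − 1/r > 0. Hence the sequence is weakly democratic but not democratic. -/

import Mathlib

open scoped ENNReal

/-- Probability of the trajectory `i, w 0, w 1, …, w t` under kernel `P`. -/
noncomputable def pathP {V : Type*} (P : V → V → ℝ) (i : V) (t : ℕ)
    (w : Fin (t + 1) → V) : ℝ≥0∞ :=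
  ENNReal.ofReal (P i (w 0)) * ∏ s : Fin t, ENNReal.ofReal (P (w s.castSucc) (w s.succ))

open Classical in
/-- Probability that, started at `i`, the chain hits `S` for the first time at time `t+1`. -/
noncomputable def firstHit {V : Type*} (P : V → V → ℝ) (i : V) (S : Set V) (t : ℕ) : ℝ≥0∞ :=
  ∑' w : Fin (t + 1) → V,
    if w (Fin.last t) ∈ S ∧ ∀ s : Fin t, w s.castSucc ∉ S then pathP P i t w else 0

/-- Expected first return time to `i` (computed on the event that the return time is finite). -/
noncomputable def expRet {V : Type*} (P : V → V → ℝ) (i : V) : ℝ≥0∞ :=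
  ∑' t : ℕ, ((t : ℝ≥0∞) + 1) * firstHit P i {i} t

/-- Probability of ever returning to `i`. -/
noncomputable def retProb {V : Type*} (P : V → V → ℝ) (i : V) : ℝ≥0∞ :=
  ∑' t : ℕ, firstHit P i {i} t

open Classical in
/-- Expected hitting time of the set `S` starting from `i`. -/
noncomputable def expHit {V : Type*} (P : V → V → ℝ) (i : V) (S : Set V) : ℝ≥0∞ :=
  if i ∈ S then 0 else ∑' t : ℕ, ((t : ℝ≥0∞) + 1) * firstHit P i S t

open Classical in
/-- Probability that, started at `i`, the chain returns to `i` at time `t+1`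
while having stayed inside the set `B` the whole time. -/
noncomputable def firstRetIn {V : Type*} (P : V → V → ℝ) (i : V) (B : Set V) (t : ℕ) : ℝ≥0∞ :=
  ∑' w : Fin (t + 1) → V,
    if (∀ s : Fin (t + 1), w s ∈ B) ∧ w (Fin.last t) = i ∧ ∀ s : Fin t, w s.castSucc ≠ i
    then pathP P i t w else 0

/-- `reachLe P k a b`: `b` is reachable from `a` in at most `k` steps of the directed
graph of `P`. -/
def reachLe {V : Type*} (P : V → V → ℝ) : ℕ → V → V → Prop
  | 0, a, b => a = b
  | (k + 1), a, b => reachLe P k a b ∨ ∃ c, reachLe P k a c ∧ 0 < P c b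

/-- The ball of radius `R` around `i` in the directed graph of `P`. -/
def ball {V : Type*} (P : V → V → ℝ) (i : V) (R : ℕ) : Set V := {v | reachLe P R i v}

/-- For `1/2 < δ < 1` and `r = δ/(1-δ) > 1`, each fixed coordinate of
`π⁽ⁿ⁾ᵢ = r^(i-1)(1-r)/(1-rⁿ)` tends to `0`, yet the maximum coordinate, attained at
`i = n`, tends to `1 - 1/r > 0`: the sequence is weakly democratic but not democratic. -/
theorem stmt6 (δ : ℝ) (hδhalf : 1 / 2 < δ) (hδ1 : δ < 1) (r : ℝ) (hr : r = δ / (1 - δ)) :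
    (∀ i : ℕ, 1 ≤ i →
      Filter.Tendsto (fun n : ℕ => r ^ (i - 1) * (1 - r) / (1 - r ^ n)) Filter.atTop
        (nhds 0)) ∧
    (∀ n i : ℕ, 1 ≤ i → i ≤ n →
      r ^ (i - 1) * (1 - r) / (1 - r ^ n) ≤ r ^ (n - 1) * (1 - r) / (1 - r ^ n)) ∧
    Filter.Tendsto (fun n : ℕ => r ^ (n - 1) * (1 - r) / (1 - r ^ n)) Filter.atTop
      (nhds (1 - 1 / r)) ∧
    0 < 1 - 1 / r := by
  have hδ0 : 0 < 1 - δ := by linarith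
  have hr1 : 1 < r := by
    rw [hr, lt_div_iff₀ hδ0]; linarith
  have hr0 : 0 < r := by linarith
  have hlim : Filter.Tendsto (fun n : ℕ => r ^ n) Filter.atTop Filter.atTop :=
    tendsto_pow_atTop_atTop_of_one_lt hr1
  refine ⟨?_, ?_, ?_, ?_⟩
  · intro i _
    have h1 : Filter.Tendsto (fun n : ℕ => r ^ n - 1) Filter.atTop Filter.atTop :=
      Filter.tendsto_atTop_add_const_right Filter.atTop (-1) hlim
    have h2 : Filter.Tendsto (fun n : ℕ => (r ^ n - 1)⁻¹) Filter.atTop (nhds 0) :=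
      h1.inv_tendsto_atTop
    have h3 := h2.const_mul (-(r ^ (i - 1) * (1 - r)))
    rw [mul_zero] at h3
    refine h3.congr fun n => ?_
    rw [show (1 - r ^ n) = -(r ^ n - 1) by ring, div_neg, div_eq_mul_inv]
    ring
  · intro n i hi hin
    have hn1 : 1 ≤ n := le_trans hi hin
    have hrn : 1 < r ^ n := one_lt_pow₀ hr1 (by omega)
    have key : ∀ j : ℕ, r ^ j * (1 - r) / (1 - r ^ n) = r ^ j * (r - 1) / (r ^ n - 1) := by
      intro j
      rw [show (1 - r ^ n) = -(r ^ n - 1) by ring,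
        show r ^ j * (1 - r) = -(r ^ j * (r - 1)) by ring, neg_div_neg_eq]
    rw [key, key, div_le_div_iff_of_pos_right (show (0:ℝ) < r ^ n - 1 by linarith)]
    exact mul_le_mul_of_nonneg_right (pow_le_pow_right₀ hr1.le (by omega)) (by linarith)
  · have hinv : Filter.Tendsto (fun n : ℕ => (1 / r) ^ n) Filter.atTop (nhds 0) := by
      apply tendsto_pow_atTop_nhds_zero_of_lt_one (by positivity)
      rw [div_lt_one hr0]; exact hr1
    have h2 : Filter.Tendsto (fun n : ℕ => (1 - 1 / r) / (1 - (1 / r) ^ n)) Filter.atTop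
        (nhds (1 - 1 / r)) := by
      have := Filter.Tendsto.div (tendsto_const_nhds (x := (1 - 1 / r)) (f := (Filter.atTop : Filter ℕ)))
        (tendsto_const_nhds.sub hinv) (show (1:ℝ) - 0 ≠ 0 by norm_num)
      simpa [Pi.div_def] using this
    apply h2.congr'
    filter_upwards [Filter.eventually_ge_atTop 1] with n hn
    obtain ⟨m, rfl⟩ : ∃ m, n = m + 1 := ⟨n - 1, by omega⟩
    have hrne : r ≠ 0 := ne_of_gt hr0
    have h1r : (1 : ℝ) - r ^ (m + 1) ≠ 0 := by
      have : 1 < r ^ (m + 1) := one_lt_pow₀ hr1 (by omega)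
      intro h; linarith
    have h1r' : (1 : ℝ) - (1 / r) ^ (m + 1) ≠ 0 := by
      have h01 : (1 / r) ^ (m + 1) < 1 := pow_lt_one₀ (by positivity) ((div_lt_one hr0).mpr hr1) (by omega)
      intro h; linarith
    simp only [Nat.add_sub_cancel]
    have e1 : (1 / r) ^ (m + 1) = (r ^ (m + 1))⁻¹ := by
      rw [div_pow, one_pow, one_div]
    rw [e1] at h1r' ⊢
    rw [div_eq_div_iff h1r' h1r]
    have hpne : r ^ (m + 1) ≠ 0 := pow_ne_zero _ hrne
    field_simp
    ring
  · have : 1 / r < 1 := (div_lt_one hr0).mpr hr1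
    linarith
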